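/- arXiv:1001.2893 — 3 statements merged into one kernel-verified Lean document; each statement's English description precedes it below -/
import Mathlib

section
/- Let ω = e^{2πi/3} and consider the ℂ-algebra homomorphism φ*: ℂ[x,z,y,w] → ℂ[X,Y,Z] determined by x ↦ XYZ, z ↦ X³+Y³+Z³, y ↦ (X³+ωY³+ω²Z³)(X³+ω²Y³+ωZ³), w ↦ (X³+ωY³+ω²Z³)³. Then the kernel of φ* is exactly the principal ideal generated by w² + y³ − 27wx³ − 3wyz + wz³. -/
noncomputable section
open MvPolynomial Complex

/-- ω = e^{2πi/3}, a primitive cube root of unity. -/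
def ω : ℂ := Complex.exp (2 * Real.pi * Complex.I / 3)

/-- the images of (x, z, y, w) under φ*: x ↦ XYZ, z ↦ X³+Y³+Z³,
y ↦ (X³+ωY³+ω²Z³)(X³+ω²Y³+ωZ³), w ↦ (X³+ωY³+ω²Z³)³.  Variables of ℂ[x,z,y,w] are
x = X 0, z = X 1, y = X 2, w = X 3. -/
def fvec : Fin 4 → MvPolynomial (Fin 3) ℂ :=
  ![X 0 * X 1 * X 2,
    X 0 ^ 3 + X 1 ^ 3 + X 2 ^ 3,
    (X 0 ^ 3 + C ω * X 1 ^ 3 + C (ω ^ 2) * X 2 ^ 3) *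
      (X 0 ^ 3 + C (ω ^ 2) * X 1 ^ 3 + C ω * X 2 ^ 3),
    (X 0 ^ 3 + C ω * X 1 ^ 3 + C (ω ^ 2) * X 2 ^ 3) ^ 3]

/-- w² + y³ − 27wx³ − 3wyz + wz³. -/
def Frel : MvPolynomial (Fin 4) ℂ :=
  X 3 ^ 2 + X 2 ^ 3 - C 27 * X 3 * X 0 ^ 3 - C 3 * X 3 * X 2 * X 1 + X 3 * X 1 ^ 3

/-! ### Basic facts about ω -/

lemma omega_im : ω.im = Real.sin (2 * Real.pi / 3) := by
  have h : (2 * Real.pi * Complex.I / 3) = ((2 * Real.pi / 3 : ℝ) : ℂ) * Complex.I := by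
    push_cast; ring
  rw [ω, h, Complex.exp_ofReal_mul_I_im]

lemma omega_im_ne : ω.im ≠ 0 := by
  rw [omega_im]
  have h1 : 0 < 2 * Real.pi / 3 := by positivity
  have h2 : 2 * Real.pi / 3 < Real.pi := by nlinarith [Real.pi_pos]
  exact ne_of_gt (Real.sin_pos_of_pos_of_lt_pi h1 h2)

lemma omega_ne_one : ω ≠ 1 := by
  intro h
  have := omega_im_ne
  rw [h] at this
  simp at this

lemma omega_cube : ω ^ 3 = 1 := by
  rw [ω, ← Complex.exp_nat_mul]
  rw [show (3 : ℕ) * (2 * Real.pi * Complex.I / 3) = 2 * Real.pi * Complex.I by push_cast; ring]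
  exact Complex.exp_two_pi_mul_I

lemma omega_rel : ω ^ 2 + ω + 1 = 0 := by
  have h : (ω - 1) * (ω ^ 2 + ω + 1) = 0 := by
    linear_combination omega_cube
  rcases mul_eq_zero.1 h with h1 | h2
  · exact absurd (sub_eq_zero.1 h1) omega_ne_one
  · exact h2

/-! ### Generic ring identities for a primitive cube root of unity -/

lemma cube_identity {R : Type*} [CommRing R] (t u v z : R) (h : t^2 + t + 1 = 0) :
    (u+v+z)^3 + (u+t*v+t^2*z)^3 + (u+t^2*v+t*z)^3
      - 3*(u+v+z)*((u+t*v+t^2*z)*(u+t^2*v+t*z)) - 27*(u*v*z) = 0 := by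
  linear_combination (z^3 + 3*v*z^2 + 3*v^2*z + v^3 + 3*u*z^2 + (-21)*u*v*z + 3*u*v^2 +
    (-1)*t*z^3 + (-3)*t*v*z^2 + (-3)*t*v^2*z + (-1)*t*v^3 + (-6)*t*u*z^2 + 15*t*u*v*z +
    (-6)*t*u*v^2 + (-3)*t^2*v*z^2 + (-3)*t^2*v^2*z + 3*t^2*u*z^2 + (-3)*t^2*u*v*z +
    3*t^2*u*v^2 + (-1)*t^3*z^3 + 3*t^3*v*z^2 + 3*t^3*v^2*z + (-1)*t^3*v^3 + t^4*z^3 +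
    t^4*v^3) * h

lemma prod_identity {R : Type*} [CommRing R] (t u v z : R) (h : t^2 + t + 1 = 0) :
    (u+t*v+t^2*z)*(u+t^2*v+t*z) = u^2+v^2+z^2-u*v-u*z-v*z := by
  linear_combination ((-1)*z^2 + v*z + (-1)*v^2 + u*z + u*v + t*z^2 + (-1)*t*v*z + t*v^2 +
    t^2*v*z) * h

lemma Crel : (C ω : MvPolynomial (Fin 3) ℂ)^2 + C ω + 1 = 0 := by
  have := congrArg (C : ℂ → MvPolynomial (Fin 3) ℂ) omega_rel
  simpa using this

/-! ### fvec components -/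

lemma fvec0 : fvec 0 = X 0 * X 1 * X 2 := rfl
lemma fvec1 : fvec 1 = X 0 ^ 3 + X 1 ^ 3 + X 2 ^ 3 := rfl
lemma fvec2 : fvec 2 = (X 0 ^ 3 + C ω * X 1 ^ 3 + C (ω ^ 2) * X 2 ^ 3) *
      (X 0 ^ 3 + C (ω ^ 2) * X 1 ^ 3 + C ω * X 2 ^ 3) := rfl
lemma fvec3 : fvec 3 = (X 0 ^ 3 + C ω * X 1 ^ 3 + C (ω ^ 2) * X 2 ^ 3) ^ 3 := rfl

set_option maxHeartbeats 1000000 in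
/-- The relation Frel is in the kernel. -/
lemma aeval_Frel : aeval fvec Frel = 0 := by
  rw [Frel]
  simp only [map_add, map_sub, map_mul, map_pow, aeval_X, aeval_C, algebraMap_eq, map_ofNat,
    fvec0, fvec1, fvec2, fvec3]
  linear_combination (X 0 ^ 3 + C ω * X 1 ^ 3 + (C ω)^2 * X 2 ^ 3)^3 *
    cube_identity (C ω : MvPolynomial (Fin 3) ℂ) (X 0 ^ 3) (X 1 ^ 3) (X 2 ^ 3) Crel

/-! ### Surjectivity of the associated polynomial map ℂ³ → ℂ³ (first three coordinates) -/

lemma surj3 (α β γ : ℂ) : ∃ A B D : ℂ, A*B*D = α ∧ A^3+B^3+D^3 = β ∧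
    (A^3+ω*B^3+ω^2*D^3)*(A^3+ω^2*B^3+ω*D^3) = γ := by
  set e2 : ℂ := (β^2 - γ)/3 with he2
  have he2three : 3 * e2 = β^2 - γ := by rw [he2]; ring
  obtain ⟨u, hu⟩ := Complex.exists_root (f := Polynomial.C 1 * Polynomial.X^3 +
      Polynomial.C (-β) * Polynomial.X^2 + Polynomial.C e2 * Polynomial.X + Polynomial.C (-α^3))
    (by rw [Polynomial.degree_cubic (one_ne_zero)]; norm_num)
  have hu' : u^3 - β*u^2 + e2*u - α^3 = 0 := by
    have := hu
    simp only [Polynomial.IsRoot, Polynomial.eval_add, Polynomial.eval_mul, Polynomial.eval_pow,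
      Polynomial.eval_C, Polynomial.eval_X] at this
    linear_combination this
  obtain ⟨d, hd⟩ := IsAlgClosed.exists_pow_nat_eq (k := ℂ)
    ((β-u)^2 - 4*(e2 - u*β + u^2)) (n := 2) (by norm_num)
  set v : ℂ := ((β-u)+d)/2 with hv
  set t : ℂ := ((β-u)-d)/2 with ht
  have h1 : v + t = β - u := by rw [hv, ht]; ring
  have h2 : v * t = e2 - u*β + u^2 := by rw [hv, ht]; linear_combination (-1/4 : ℂ) * hd
  have huvt : u * (v * t) = α^3 := by linear_combination u * h2 + hu'
  obtain ⟨A0, hA0⟩ := IsAlgClosed.exists_pow_nat_eq (k := ℂ) u (n := 3) (by norm_num)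
  obtain ⟨B0, hB0⟩ := IsAlgClosed.exists_pow_nat_eq (k := ℂ) v (n := 3) (by norm_num)
  obtain ⟨D0, hD0⟩ := IsAlgClosed.exists_pow_nat_eq (k := ℂ) t (n := 3) (by norm_num)
  have hm3 : (A0*B0*D0)^3 = α^3 := by rw [mul_pow, mul_pow, hA0, hB0, hD0]; linear_combination huvt
  have key : ∃ A : ℂ, A^3 = u ∧ A*B0*D0 = α := by
    by_cases hm0 : A0*B0*D0 = 0
    · refine ⟨A0, hA0, ?_⟩
      rw [hm0] at hm3 ⊢
      have : α = 0 := by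
        have := hm3.symm
        simpa [pow_eq_zero_iff] using this
      simp [this]
    · refine ⟨(α/(A0*B0*D0)) * A0, ?_, ?_⟩
      · have hz : (α/(A0*B0*D0))^3 = 1 := by
          have hα : α ≠ 0 := by
            intro h0
            apply hm0
            have h3 : (A0*B0*D0)^3 = 0 := by rw [hm3, h0]; ring
            simpa using pow_eq_zero_iff (n := 3) (by norm_num) |>.1 h3
          rw [div_pow, hm3]
          exact div_self (pow_ne_zero _ hα)
        rw [mul_pow, hz, one_mul, hA0]
      · rw [show α / (A0*B0*D0) * A0 * B0 * D0 = α / (A0*B0*D0) * (A0*B0*D0) by ring,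
          div_mul_cancel₀ _ hm0]
  obtain ⟨A, hA, hAprod⟩ := key
  refine ⟨A, B0, D0, hAprod, ?_, ?_⟩
  · rw [hA, hB0, hD0]
    linear_combination h1
  · rw [hA, hB0, hD0, prod_identity ω u v t omega_rel]
    linear_combination (v + t + β - 2*u) * h1 + (-3 : ℂ) * h2 + (-1 : ℂ) * he2three

/-- the first three coordinate polynomials, as a map Fin 3 → ℂ[X,Y,Z]. -/
def gvec : Fin 3 → MvPolynomial (Fin 3) ℂ :=
  ![X 0 * X 1 * X 2,
    X 0 ^ 3 + X 1 ^ 3 + X 2 ^ 3,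
    (X 0 ^ 3 + C ω * X 1 ^ 3 + C (ω ^ 2) * X 2 ^ 3) *
      (X 0 ^ 3 + C (ω ^ 2) * X 1 ^ 3 + C ω * X 2 ^ 3)]

/-- The three polynomials XYZ, X³+Y³+Z³, (X³+ωY³+ω²Z³)(X³+ω²Y³+ωZ³) are algebraically
independent: substitution into them is injective on ℂ[x,z,y]. -/
lemma inj3 (r : MvPolynomial (Fin 3) ℂ) (h : aeval gvec r = 0) : r = 0 := by
  apply MvPolynomial.funext
  intro x
  rw [map_zero]
  obtain ⟨A, B, D, h1, h2, h3⟩ := surj3 (x 0) (x 1) (x 2)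
  have hc := congrArg (MvPolynomial.aeval (R := ℂ) (![A, B, D] : Fin 3 → ℂ)) h
  rw [map_zero, ← AlgHom.comp_apply, MvPolynomial.comp_aeval] at hc
  have hfun : (fun i => MvPolynomial.aeval (![A, B, D] : Fin 3 → ℂ) (gvec i)) = x := by
    funext i
    fin_cases i
    · simpa [gvec] using h1
    · simpa [gvec] using h2
    · simpa [gvec] using h3
  rw [hfun] at hc
  exact hc

/-! ### The variable-permuting equivalence ℂ[x,z,y,w] ≃ (ℂ[x,z,y])[w] -/

/-- move variable `3` (that is `w`) into polynomial position -/
def E : MvPolynomial (Fin 4) ℂ ≃ₐ[ℂ] Polynomial (MvPolynomial (Fin 3) ℂ) :=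
  (renameEquiv ℂ (finRotate 4)).trans (finSuccEquiv ℂ 3)

lemma hE0 : E (X 0) = Polynomial.C (X 0) := by
  show (finSuccEquiv ℂ 3) (rename (finRotate 4) (X 0)) = _
  rw [rename_X, show (finRotate 4) 0 = Fin.succ 0 from rfl, finSuccEquiv_X_succ]

lemma hE1 : E (X 1) = Polynomial.C (X 1) := by
  show (finSuccEquiv ℂ 3) (rename (finRotate 4) (X 1)) = _
  rw [rename_X, show (finRotate 4) 1 = Fin.succ 1 from rfl, finSuccEquiv_X_succ]

lemma hE2 : E (X 2) = Polynomial.C (X 2) := by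
  show (finSuccEquiv ℂ 3) (rename (finRotate 4) (X 2)) = _
  rw [rename_X, show (finRotate 4) 2 = Fin.succ 2 from rfl, finSuccEquiv_X_succ]

lemma hE3 : E (X 3) = Polynomial.X := by
  show (finSuccEquiv ℂ 3) (rename (finRotate 4) (X 3)) = _
  rw [rename_X, show (finRotate 4) 3 = 0 from rfl, finSuccEquiv_X_zero]

/-- evaluation Polynomial (ℂ[X,Y,Z]) → ℂ[X,Y,Z]: coefficients via `aeval gvec`,
variable to `fvec 3`. -/
def Ψ : Polynomial (MvPolynomial (Fin 3) ℂ) →ₐ[ℂ] MvPolynomial (Fin 3) ℂ :=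
  Polynomial.aevalTower (MvPolynomial.aeval gvec) (fvec 3)

lemma ΨC (a : MvPolynomial (Fin 3) ℂ) : Ψ (Polynomial.C a) = aeval gvec a :=
  Polynomial.aevalTower_C _ _ _

lemma ΨX : Ψ Polynomial.X = fvec 3 := Polynomial.aevalTower_X _ _

lemma hcomp : ∀ q : MvPolynomial (Fin 4) ℂ, Ψ (E q) = aeval fvec q := by
  have h : (Ψ.comp E.toAlgHom : MvPolynomial (Fin 4) ℂ →ₐ[ℂ] MvPolynomial (Fin 3) ℂ)
      = aeval fvec := by
    apply MvPolynomial.algHom_ext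
    intro i
    fin_cases i
    · show Ψ (E (X 0)) = aeval fvec (X 0)
      rw [hE0, aeval_X]
      show Polynomial.aevalTower (MvPolynomial.aeval gvec) (fvec 3) (Polynomial.C (X 0)) = fvec 0
      rw [Polynomial.aevalTower_C, aeval_X]; rfl
    · show Ψ (E (X 1)) = aeval fvec (X 1)
      rw [hE1, aeval_X]
      show Polynomial.aevalTower (MvPolynomial.aeval gvec) (fvec 3) (Polynomial.C (X 1)) = fvec 1
      rw [Polynomial.aevalTower_C, aeval_X]; rfl
    · show Ψ (E (X 2)) = aeval fvec (X 2)
      rw [hE2, aeval_X]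
      show Polynomial.aevalTower (MvPolynomial.aeval gvec) (fvec 3) (Polynomial.C (X 2)) = fvec 2
      rw [Polynomial.aevalTower_C, aeval_X]; rfl
    · show Ψ (E (X 3)) = aeval fvec (X 3)
      rw [hE3, aeval_X]
      exact Polynomial.aevalTower_X _ _
  intro q
  calc Ψ (E q) = (Ψ.comp E.toAlgHom) q := rfl
  _ = aeval fvec q := by rw [h]

/-- the coefficients of Frel as a polynomial in w -/
def c1 : MvPolynomial (Fin 3) ℂ := X 1 ^ 3 - C 3 * X 2 * X 1 - C 27 * X 0 ^ 3
def c0 : MvPolynomial (Fin 3) ℂ := X 2 ^ 3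

def Fq : Polynomial (MvPolynomial (Fin 3) ℂ) :=
  Polynomial.X ^ 2 + Polynomial.C c1 * Polynomial.X + Polynomial.C c0

lemma hEF : E Frel = Fq := by
  rw [Frel, Fq, c1, c0]
  simp only [map_add, map_sub, map_mul, map_pow, hE0, hE1, hE2, hE3]
  rw [show (E (C 27) : Polynomial (MvPolynomial (Fin 3) ℂ)) = Polynomial.C (C 27) by
        rw [show (C 27 : MvPolynomial (Fin 4) ℂ) = algebraMap ℂ _ 27 from rfl,
          AlgEquiv.commutes]; rfl,
      show (E (C 3) : Polynomial (MvPolynomial (Fin 3) ℂ)) = Polynomial.C (C 3) by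
        rw [show (C 3 : MvPolynomial (Fin 4) ℂ) = algebraMap ℂ _ 3 from rfl,
          AlgEquiv.commutes]; rfl]
  ring

lemma Fq_monic : Fq.Monic := by
  have h : Fq = Polynomial.X ^ 2 + (Polynomial.C c1 * Polynomial.X + Polynomial.C c0) := by
    rw [Fq]; ring
  rw [h]
  exact Polynomial.monic_X_pow_add (lt_of_le_of_lt Polynomial.degree_linear_le (by norm_num))

lemma Fq_degree : Fq.degree = 2 := by
  have h : Fq = Polynomial.C 1 * Polynomial.X ^ 2 + Polynomial.C c1 * Polynomial.X +
      Polynomial.C c0 := by rw [Fq, Polynomial.C_1, one_mul]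
  rw [h]
  exact Polynomial.degree_quadratic one_ne_zero

lemma Psi_Fq : Ψ Fq = 0 := by
  rw [← hEF, hcomp]
  exact aeval_Frel

/-! ### The Y ↔ Z swap -/

def τswap : MvPolynomial (Fin 3) ℂ →ₐ[ℂ] MvPolynomial (Fin 3) ℂ :=
  rename (Equiv.swap (1 : Fin 3) 2)

lemma τ0 : τswap (X 0) = X 0 := by
  rw [τswap, rename_X, Equiv.swap_apply_of_ne_of_ne (by decide) (by decide)]
lemma τ1 : τswap (X 1) = X 2 := by rw [τswap, rename_X, Equiv.swap_apply_left]
lemma τ2 : τswap (X 2) = X 1 := by rw [τswap, rename_X, Equiv.swap_apply_right]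

lemma τC : ∀ a : ℂ, τswap (C a) = C a := fun a => by rw [τswap]; exact rename_C _ a

lemma gvec0 : gvec 0 = X 0 * X 1 * X 2 := rfl
lemma gvec1 : gvec 1 = X 0 ^ 3 + X 1 ^ 3 + X 2 ^ 3 := rfl
lemma gvec2 : gvec 2 = (X 0 ^ 3 + C ω * X 1 ^ 3 + C (ω ^ 2) * X 2 ^ 3) *
      (X 0 ^ 3 + C (ω ^ 2) * X 1 ^ 3 + C ω * X 2 ^ 3) := rfl

lemma τ_gvec : ∀ j, τswap (gvec j) = gvec j := by
  intro j
  fin_cases j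
  · show τswap (gvec 0) = gvec 0
    rw [gvec0]
    simp only [map_mul, τ0, τ1, τ2]
    ring
  · show τswap (gvec 1) = gvec 1
    rw [gvec1]
    simp only [map_add, map_pow, τ0, τ1, τ2]
    ring
  · show τswap (gvec 2) = gvec 2
    rw [gvec2]
    simp only [map_mul, map_add, map_pow, τ0, τ1, τ2, τC]
    ring

lemma τ_aeval : ∀ q : MvPolynomial (Fin 3) ℂ, τswap (aeval gvec q) = aeval gvec q := by
  intro q
  rw [← AlgHom.comp_apply, MvPolynomial.comp_aeval,
    show (fun i => τswap (gvec i)) = gvec from funext τ_gvec]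

lemma τ_T : τswap (fvec 3) = (X 0 ^ 3 + C (ω ^ 2) * X 1 ^ 3 + C ω * X 2 ^ 3) ^ 3 := by
  rw [fvec3]
  simp only [map_pow, map_add, map_mul, τ0, τ1, τ2, τC]
  ring

/-! ### a³ ≠ b³ -/

lemma cube_diff_ne :
    ((X 0 ^ 3 + C ω * X 1 ^ 3 + C (ω ^ 2) * X 2 ^ 3 : MvPolynomial (Fin 3) ℂ)) ^ 3 ≠
      (X 0 ^ 3 + C (ω ^ 2) * X 1 ^ 3 + C ω * X 2 ^ 3) ^ 3 := by
  intro h0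
  obtain ⟨c, hc⟩ := IsAlgClosed.exists_pow_nat_eq (k := ℂ) 2 (n := 3) (by norm_num)
  have he := congrArg (MvPolynomial.eval (![0, 1, c] : Fin 3 → ℂ)) h0
  simp only [map_pow, map_add, map_mul, MvPolynomial.eval_X, MvPolynomial.eval_C] at he
  rw [show (![0, 1, c] : Fin 3 → ℂ) 0 = 0 from rfl, show (![0, 1, c] : Fin 3 → ℂ) 1 = 1 from rfl,
    show (![0, 1, c] : Fin 3 → ℂ) 2 = c from rfl] at he
  rw [hc] at he
  have heq : (ω + 2*ω^2)^3 = (ω^2 + 2*ω)^3 := by linear_combination he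
  have hhalf : ω = -1/2 := by
    linear_combination (-1/12 : ℂ) * heq + ((6 + 6*ω - 12*ω^2 - ω^3 + 7*ω^4)/12) * omega_rel
  apply omega_im_ne
  rw [hhalf]
  norm_num

/-! ### Main theorem -/

set_option maxHeartbeats 1000000 in
/-- The kernel of the substitution homomorphism φ* : ℂ[x,z,y,w] → ℂ[X,Y,Z] is exactly
the principal ideal generated by w² + y³ − 27wx³ − 3wyz + wz³. -/
theorem ker_phi_star :
    RingHom.ker (aeval fvec : MvPolynomial (Fin 4) ℂ →ₐ[ℂ] MvPolynomial (Fin 3) ℂ) =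
      Ideal.span {Frel} := by
  apply le_antisymm
  · -- hard direction: ker ⊆ span {Frel}
    intro p hp
    have hp0 : aeval fvec p = 0 := hp
    have hdiv := Polynomial.modByMonic_add_div (E p) Fq
    set r : Polynomial (MvPolynomial (Fin 3) ℂ) := E p %ₘ Fq with hrdef
    have hdegr : r.degree < 2 := by
      rw [← Fq_degree]
      exact Polynomial.degree_modByMonic_lt _ Fq_monic
    have hdle : r.degree ≤ 1 := by
      by_cases h0 : r = 0
      · simp [h0]
      · rw [Polynomial.degree_eq_natDegree h0] at hdegr ⊢
        exact_mod_cast Nat.lt_succ_iff.1 (by exact_mod_cast hdegr)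
    have hr : r = Polynomial.C (r.coeff 1) * Polynomial.X + Polynomial.C (r.coeff 0) :=
      Polynomial.eq_X_add_C_of_degree_le_one hdle
    have hΨr : Ψ r = 0 := by
      have h1 : Ψ (E p) = 0 := by rw [hcomp]; exact hp0
      have h2 : Ψ r + Ψ Fq * Ψ (E p /ₘ Fq) = Ψ (E p) := by
        rw [← map_mul, ← map_add, hdiv]
      rw [Psi_Fq, zero_mul, add_zero] at h2
      rw [h2, h1]
    set AA : MvPolynomial (Fin 3) ℂ := aeval gvec (r.coeff 1) with hAA
    set BB : MvPolynomial (Fin 3) ℂ := aeval gvec (r.coeff 0) with hBB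
    have h1 : AA * fvec 3 + BB = 0 := by
      have hΨr' : Ψ (Polynomial.C (r.coeff 1) * Polynomial.X + Polynomial.C (r.coeff 0)) = 0 := by
        rw [← hr]; exact hΨr
      rw [map_add, map_mul, ΨC, ΨC, ΨX] at hΨr'
      rw [hAA, hBB]
      exact hΨr'
    have h2 : AA * ((X 0 ^ 3 + C (ω ^ 2) * X 1 ^ 3 + C ω * X 2 ^ 3) ^ 3) + BB = 0 := by
      have := congrArg τswap h1
      rw [map_add, map_mul, map_zero, τ_T] at this
      rw [hAA, hBB] at this ⊢
      rw [τ_aeval, τ_aeval] at this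
      exact this
    have hsub : AA * ((X 0 ^ 3 + C ω * X 1 ^ 3 + C (ω ^ 2) * X 2 ^ 3) ^ 3 -
        (X 0 ^ 3 + C (ω ^ 2) * X 1 ^ 3 + C ω * X 2 ^ 3) ^ 3) = 0 := by
      rw [fvec3] at h1
      linear_combination h1 - h2
    have hAA0 : AA = 0 := by
      rcases mul_eq_zero.1 hsub with h | h
      · exact h
      · exact absurd (sub_eq_zero.1 h) cube_diff_ne
    have hBB0 : BB = 0 := by
      rw [hAA0, zero_mul, zero_add] at h1
      exact h1
    have hc1 : r.coeff 1 = 0 := inj3 _ hAA0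
    have hc0 : r.coeff 0 = 0 := inj3 _ hBB0
    have hr0 : r = 0 := by rw [hr, hc1, hc0]; simp
    have hEp : Fq * (E p /ₘ Fq) = E p := by
      rw [hr0, zero_add] at hdiv
      exact hdiv
    have hfac : p = Frel * E.symm (E p /ₘ Fq) := by
      apply E.injective
      rw [map_mul, hEF, AlgEquiv.apply_symm_apply]
      exact hEp.symm
    exact Ideal.mem_span_singleton.2 ⟨_, hfac⟩
  · -- easy direction
    rw [Ideal.span_le, Set.singleton_subset_iff]
    show Frel ∈ RingHom.ker _
    rw [RingHom.mem_ker]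
    exact aeval_Frel
end
end

section
/- For every natural number m, the number of quadruples (a,b,c,d) with a,b,c natural numbers and d ∈ {0,1} satisfying 3a + 3b + 6c + 9d = 3m equals 1 + m(m+1)/2; moreover, for any natural number n not divisible by 3 there are no such quadruples with 3a + 3b + 6c + 9d = n. (Equivalently: the graded piece of degree n of the ring ℂ[x,z,y,w]/(w² + y³ − 27wx³ − 3wyz + wz³), graded by deg(xᵃzᵇyᶜwᵈ) = 3a+3b+6c+9d, has ℂ-dimension 0 if 3∤n and 1 + m(m+1)/2 if n = 3m.) -/
open Finset

/-- pairs (a,n) with a+n ≤ m, n ≠ 1 -/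
private def G (m : ℕ) : Finset (ℕ × ℕ) :=
  (range (m+1) ×ˢ range (m+1)).filter (fun p => p.2 ≠ 1 ∧ p.1 + p.2 ≤ m)

private lemma cardG (m : ℕ) : (G m).card = 1 + m * (m + 1) / 2 := by
  have hG : G m = (filter (· ≠ 1) (range (m+1))).biUnion
      (fun n => (range (m+1-n)).image (fun a => (a, n))) := by
    ext ⟨a, n⟩
    simp only [G, mem_filter, mem_product, mem_range, mem_biUnion, mem_image]
    constructor
    · rintro ⟨⟨ha, hn⟩, hne, hle⟩
      exact ⟨n, ⟨by omega, hne⟩, a, by omega, rfl⟩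
    · rintro ⟨n', ⟨hn', hne⟩, a', ha', h⟩
      obtain ⟨rfl, rfl⟩ := Prod.mk.injEq .. ▸ h
      omega
  rw [hG, card_biUnion]
  · have hcard : ∀ n ∈ filter (· ≠ 1) (range (m+1)),
        ((range (m+1-n)).image (fun a => (a, n))).card = m + 1 - n := by
      intro n _
      rw [card_image_of_injective _ (fun x y h => (Prod.mk.injEq .. ▸ h).1), card_range]
    rw [sum_congr rfl hcard]
    have hfil : filter (· ≠ 1) (range (m+1)) = (range (m+1)).erase 1 :=
      filter_ne' _ _
    rw [hfil]
    rcases Nat.eq_zero_or_pos m with rfl | hm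
    · decide
    · have h1 : (1 : ℕ) ∈ range (m+1) := by simp; omega
      show (∑ n ∈ (range (m+1)).erase 1, (m + 1 - n)) = 1 + m * (m + 1) / 2
      have key : (∑ n ∈ (range (m+1)).erase 1, (m + 1 - n)) + (m + 1 - 1)
          = ∑ n ∈ range (m+1), (m + 1 - n) :=
        Finset.sum_erase_add (range (m+1)) (fun n => m + 1 - n) h1
      have hsum : ∑ n ∈ range (m+1), (m + 1 - n) = ∑ j ∈ range (m+1), (j + 1) := by
        rw [← Finset.sum_range_reflect]
        apply sum_congr rfl
        intro j hj
        simp only [mem_range] at hj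
        omega
      have hgauss : (∑ i ∈ range (m+1), i) * 2 = (m+1) * m :=
        Finset.sum_range_id_mul_two (m+1)
      have hsum2 : ∑ j ∈ range (m+1), (j + 1) = (∑ i ∈ range (m+1), i) + (m+1) := by
        rw [Finset.sum_add_distrib, Finset.sum_const, card_range, smul_eq_mul, mul_one]
      have h2 : 2 * (m * (m+1) / 2) = m * (m+1) := by
        apply Nat.two_mul_div_two_of_even
        exact Nat.even_mul_succ_self m
      have hmm : (m+1) * m = m * (m+1) := Nat.mul_comm _ _
      omega
  · intro x hx y hy hxy
    simp only [disjoint_left, mem_image, mem_range]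
    rintro ⟨a, n⟩ ⟨a1, _, h1⟩ ⟨a2, _, h2⟩
    apply hxy
    have e1 := (Prod.mk.injEq .. ▸ h1).2
    have e2 := (Prod.mk.injEq .. ▸ h2).2
    omega

private def F (m : ℕ) : Finset (ℕ × ℕ × ℕ × ℕ) :=
  (range (m+1) ×ˢ range (m+1) ×ˢ range (m+1) ×ˢ range 2).filter
    (fun q => q.2.2.2 ≤ 1 ∧ q.1 + q.2.1 + 2*q.2.2.1 + 3*q.2.2.2 = m)

private lemma cardF (m : ℕ) : (F m).card = 1 + m * (m + 1) / 2 := by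
  rw [← cardG m]
  apply Finset.card_nbij (fun q => (q.1, 2*q.2.2.1 + 3*q.2.2.2))
  · rintro ⟨a, b, c, d⟩ hq
    simp only [F, mem_coe, mem_filter, mem_product, mem_range] at hq
    simp only [G, mem_coe, mem_filter, mem_product, mem_range]
    omega
  · rintro ⟨a, b, c, d⟩ hq ⟨a', b', c', d'⟩ hq' h
    simp only [F, Set.mem_setOf_eq, coe_filter, mem_product, mem_range] at hq hq'
    simp only [Prod.mk.injEq] at h ⊢
    omega
  · rintro ⟨a, n⟩ hn
    simp only [G, Set.mem_setOf_eq, coe_filter, mem_product, mem_range] at hn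
    refine ⟨(a, m - a - n, (n - 3*(n % 2))/2, n % 2), ?_, ?_⟩
    · simp only [F, Set.mem_setOf_eq, coe_filter, mem_product, mem_range]
      omega
    · simp only [Prod.mk.injEq, true_and]
      omega

/-- In the grading deg(xᵃzᵇyᶜwᵈ) = 3a+3b+6c+9d of the quotient ring
ℂ[x,z,y,w]/(w²+y³−27wx³−3wyz+wz³) (whose monomial basis has d ∈ {0,1}):
the degree-3m piece has dimension 1 + m(m+1)/2, and the pieces of degree
not divisible by 3 are zero. -/
theorem count_graded_monomials :
    (∀ m : ℕ,
      Set.ncard {q : ℕ × ℕ × ℕ × ℕ |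
          q.2.2.2 ≤ 1 ∧ 3 * q.1 + 3 * q.2.1 + 6 * q.2.2.1 + 9 * q.2.2.2 = 3 * m} =
        1 + m * (m + 1) / 2) ∧
    (∀ n : ℕ, ¬ (3 ∣ n) →
      ∀ a b c d : ℕ, d ≤ 1 → 3 * a + 3 * b + 6 * c + 9 * d ≠ n) := by
  constructor
  · intro m
    have hset : {q : ℕ × ℕ × ℕ × ℕ |
        q.2.2.2 ≤ 1 ∧ 3 * q.1 + 3 * q.2.1 + 6 * q.2.2.1 + 9 * q.2.2.2 = 3 * m}
        = ↑(F m) := by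
      ext ⟨a, b, c, d⟩
      simp only [Set.mem_setOf_eq, F, coe_filter, mem_product, mem_range]
      omega
    rw [hset, Set.ncard_coe_finset]
    exact cardF m
  · intro n hn a b c d _ h
    omega
end

section
/- Let ω = e^{2πi/3}, let g₁ = diag(1,ω,ω²), let g₂ be the cyclic permutation matrix sending (X,Y,Z) to (Z,X,Y), and let Γ ⊆ SL(3,ℂ) be the group they generate, acting on ℂ[X,Y,Z] by linear substitution. Then the ℂ-vector space of Γ-invariant homogeneous polynomials of degree n has dimension 0 if n is not divisible by 3, and dimension 1 + d(d+1)/2 if n = 3d. -/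
noncomputable section
open MvPolynomial Complex

/-- g₁ = diag(1, ω, ω²). -/
def g₁ : Matrix (Fin 3) (Fin 3) ℂ := Matrix.diagonal ![1, ω, ω ^ 2]

/-- g₂ : the cyclic permutation matrix sending (X,Y,Z) ↦ (Z,X,Y). -/
def g₂ : Matrix (Fin 3) (Fin 3) ℂ := Matrix.of ![![0,0,1],![1,0,0],![0,1,0]]

/-- Γ = Δ₂₇, the group of matrices generated by g₁ and g₂ (a finite group of matrices
of finite order, so the multiplicative closure is already a group). -/
def Γm : Submonoid (Matrix (Fin 3) (Fin 3) ℂ) := Submonoid.closure {g₁, g₂}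

/-- the action of a 3×3 matrix on ℂ[X,Y,Z] by linear substitution of the variables. -/
def act (g : Matrix (Fin 3) (Fin 3) ℂ) :
    MvPolynomial (Fin 3) ℂ →ₐ[ℂ] MvPolynomial (Fin 3) ℂ :=
  aeval (fun i => ∑ j, C (g i j) * X j)

/-- The ℂ-subspace of Γ-invariant polynomials. -/
def invSub : Submodule ℂ (MvPolynomial (Fin 3) ℂ) where
  carrier := {p | ∀ g ∈ Γm, act g p = p}
  add_mem' := fun ha hb g hg => by rw [map_add, ha g hg, hb g hg]
  zero_mem' := fun g hg => map_zero (act g)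
  smul_mem' := fun c p hp g hg => by rw [map_smul, hp g hg]


lemma hω : IsPrimitiveRoot ω 3 := by
  have h := Complex.isPrimitiveRoot_exp 3 (by norm_num)
  have : ((3:ℕ):ℂ) = (3:ℂ) := by norm_num
  rw [this] at h
  exact h

lemma omega_pow_eq_one_iff (k : ℕ) : ω ^ k = 1 ↔ 3 ∣ k := hω.pow_eq_one_iff_dvd k

-- act is an antihomomorphism
lemma act_mul (g h : Matrix (Fin 3) (Fin 3) ℂ) (p : MvPolynomial (Fin 3) ℂ) :
    act (g * h) p = act h (act g p) := by
  have : act (g * h) = (act h).comp (act g) := by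
    apply MvPolynomial.algHom_ext
    intro i
    simp only [act, AlgHom.comp_apply, aeval_X, map_sum, map_mul, aeval_C]
    rw [show (∑ x : Fin 3, (algebraMap ℂ (MvPolynomial (Fin 3) ℂ)) (g i x) * ∑ j : Fin 3, C (h x j) * X j)
        = ∑ x : Fin 3, ∑ j : Fin 3, C (g i x) * (C (h x j) * X j) by
      refine Finset.sum_congr rfl fun x _ => ?_
      rw [Finset.mul_sum]; rfl]
    rw [Finset.sum_comm]
    refine Finset.sum_congr rfl fun j _ => ?_
    rw [Matrix.mul_apply, map_sum, Finset.sum_mul]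
    exact Finset.sum_congr rfl fun x _ => by rw [C_mul, mul_assoc]
  rw [this]; rfl

lemma act_one (p : MvPolynomial (Fin 3) ℂ) : act 1 p = p := by
  have : act 1 = AlgHom.id ℂ (MvPolynomial (Fin 3) ℂ) := by
    apply MvPolynomial.algHom_ext
    intro i
    simp only [act, aeval_X, AlgHom.id_apply]
    rw [Finset.sum_eq_single i]
    · simp [Matrix.one_apply]
    · intro j _ hj; simp [Matrix.one_apply, (Ne.symm hj)]
    · intro h; simp at h
  rw [this]; rfl

def rot (m : Fin 3 →₀ ℕ) : Fin 3 →₀ ℕ := Finsupp.equivFunOnFinite.symm ![m 1, m 2, m 0]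

@[simp] lemma rot_apply (m : Fin 3 →₀ ℕ) (i : Fin 3) : rot m i = ![m 1, m 2, m 0] i := rfl

lemma rot_rot_rot (m : Fin 3 →₀ ℕ) : rot (rot (rot m)) = m := by
  ext i; fin_cases i <;> simp

lemma rot_injective : Function.Injective rot := by
  intro a b h
  rw [← rot_rot_rot a, ← rot_rot_rot b, h]

lemma act_g1_monomial (k : Fin 3 →₀ ℕ) (a : ℂ) :
    act g₁ (monomial k a) = monomial k (ω ^ (k 1 + 2 * k 2) * a) := by
  have e0 : (∑ j, C (g₁ 0 j) * X j : MvPolynomial (Fin 3) ℂ) = X 0 := by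
    simp [g₁, Fin.sum_univ_three, Matrix.diagonal]
  have e1 : (∑ j, C (g₁ 1 j) * X j : MvPolynomial (Fin 3) ℂ) = C ω * X 1 := by
    simp [g₁, Fin.sum_univ_three, Matrix.diagonal]
  have e2 : (∑ j, C (g₁ 2 j) * X j : MvPolynomial (Fin 3) ℂ) = C (ω^2) * X 2 := by
    simp [g₁, Fin.sum_univ_three, Matrix.diagonal]
  rw [act, aeval_monomial, Finsupp.prod_pow, Fin.prod_univ_three, e0, e1, e2]
  rw [monomial_eq, Finsupp.prod_pow, Fin.prod_univ_three]
  rw [algebraMap_eq]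
  simp only [C_mul, C_pow, pow_add, pow_mul, mul_pow]
  ring

lemma act_g2_monomial (k : Fin 3 →₀ ℕ) (a : ℂ) :
    act g₂ (monomial k a) = monomial (rot k) a := by
  have e0 : (∑ j, C (g₂ 0 j) * X j : MvPolynomial (Fin 3) ℂ) = X 2 := by
    simp [g₂, Fin.sum_univ_three]
  have e1 : (∑ j, C (g₂ 1 j) * X j : MvPolynomial (Fin 3) ℂ) = X 0 := by
    simp [g₂, Fin.sum_univ_three]
  have e2 : (∑ j, C (g₂ 2 j) * X j : MvPolynomial (Fin 3) ℂ) = X 1 := by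
    simp [g₂, Fin.sum_univ_three]
  rw [act, aeval_monomial, Finsupp.prod_pow, Fin.prod_univ_three, e0, e1, e2]
  rw [monomial_eq, Finsupp.prod_pow, Fin.prod_univ_three]
  simp only [rot_apply]
  rw [algebraMap_eq]
  norm_num [Matrix.cons_val_zero, Matrix.cons_val_one]
  exact Or.inl (by rw [show (![k 1, k 2, k 0] 2) = k 0 from rfl]; ring)

lemma coeff_act_g1 (p : MvPolynomial (Fin 3) ℂ) (m : Fin 3 →₀ ℕ) :
    coeff m (act g₁ p) = ω ^ (m 1 + 2 * m 2) * coeff m p := by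
  induction p using MvPolynomial.induction_on' with
  | monomial k a =>
    rw [act_g1_monomial, coeff_monomial, coeff_monomial]
    split_ifs with h
    · subst h; rfl
    · ring
  | add p q hp hq => rw [map_add, coeff_add, coeff_add, hp, hq]; ring

lemma coeff_act_g2 (p : MvPolynomial (Fin 3) ℂ) (m : Fin 3 →₀ ℕ) :
    coeff (rot m) (act g₂ p) = coeff m p := by
  induction p using MvPolynomial.induction_on' with
  | monomial k a =>
    rw [act_g2_monomial, coeff_monomial, coeff_monomial]
    congr 1
    exact propext ⟨fun h => rot_injective h, fun h => by rw [h]⟩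
  | add p q hp hq => rw [map_add, coeff_add, coeff_add, hp, hq]

lemma mem_invSub_iff (p : MvPolynomial (Fin 3) ℂ) :
    p ∈ invSub ↔ act g₁ p = p ∧ act g₂ p = p := by
  constructor
  · intro h
    refine ⟨h g₁ (Submonoid.subset_closure ?_), h g₂ (Submonoid.subset_closure ?_)⟩
    · exact Set.mem_insert _ _
    · exact Set.mem_insert_of_mem _ rfl
  · rintro ⟨h1, h2⟩ g hg
    induction hg using Submonoid.closure_induction with
    | mem x hx => rcases hx with rfl | rfl
                  · exact h1
                  · exact h2
    | one => exact act_one p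
    | mul x y hx hy hx' hy' => rw [act_mul, hx', hy']

lemma sum_eq (m : Fin 3 →₀ ℕ) : (Finsupp.weight (1 : Fin 3 → ℕ)) m = m 0 + m 1 + m 2 := by
  rw [Finsupp.weight_apply, Finsupp.sum_fintype _ _ (fun i => by simp), Fin.sum_univ_three]
  simp

lemma act_g1_eq_self_iff (p : MvPolynomial (Fin 3) ℂ) :
    act g₁ p = p ↔ ∀ m : Fin 3 →₀ ℕ, coeff m p ≠ 0 → 3 ∣ (m 1 + 2 * m 2) := by
  constructor
  · intro h m hm
    have := coeff_act_g1 p m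
    rw [h] at this
    rw [← omega_pow_eq_one_iff]
    by_contra hne
    have h0 : (1 - ω ^ (m 1 + 2 * m 2)) * coeff m p = 0 := by linear_combination this
    rcases mul_eq_zero.1 h0 with h' | h'
    · exact hne (by linear_combination -h')
    · exact hm h'
  · intro h
    apply MvPolynomial.ext
    intro m
    rw [coeff_act_g1]
    by_cases hm : coeff m p = 0
    · rw [hm]; ring
    · rw [(omega_pow_eq_one_iff _).2 (h m hm), one_mul]

lemma act_g2_eq_self_iff (p : MvPolynomial (Fin 3) ℂ) :
    act g₂ p = p ↔ ∀ m : Fin 3 →₀ ℕ, coeff (rot m) p = coeff m p := by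
  constructor
  · intro h m
    conv_lhs => rw [← h]
    exact coeff_act_g2 p m
  · intro h
    apply MvPolynomial.ext
    intro k
    have hk : rot (rot (rot k)) = k := rot_rot_rot k
    calc coeff k (act g₂ p) = coeff (rot (rot (rot k))) (act g₂ p) := by rw [hk]
      _ = coeff (rot (rot k)) p := coeff_act_g2 p _
      _ = coeff (rot (rot (rot k))) p := (h (rot (rot k))).symm
      _ = coeff k p := by rw [hk]

lemma mem_inf_iff (n : ℕ) (p : MvPolynomial (Fin 3) ℂ) :
    p ∈ homogeneousSubmodule (Fin 3) ℂ n ⊓ invSub ↔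
      (∀ m : Fin 3 →₀ ℕ, coeff m p ≠ 0 → m 0 + m 1 + m 2 = n ∧ 3 ∣ (m 1 + 2 * m 2)) ∧
      (∀ m : Fin 3 →₀ ℕ, coeff (rot m) p = coeff m p) := by
  rw [Submodule.mem_inf, mem_invSub_iff, mem_homogeneousSubmodule, act_g1_eq_self_iff,
    act_g2_eq_self_iff]
  constructor
  · rintro ⟨hh, h1, h2⟩
    exact ⟨fun m hm => ⟨by rw [← sum_eq]; exact hh hm, h1 m hm⟩, h2⟩
  · rintro ⟨h, h2⟩
    exact ⟨fun m hm => by rw [sum_eq]; exact (h m hm).1, fun m hm => (h m hm).2, h2⟩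

@[simp] lemma rot0 (m : Fin 3 →₀ ℕ) : rot m 0 = m 1 := rfl
@[simp] lemma rot1 (m : Fin 3 →₀ ℕ) : rot m 1 = m 2 := rfl
@[simp] lemma rot2 (m : Fin 3 →₀ ℕ) : rot m 2 = m 0 := rfl

lemma inf_eq_bot {n : ℕ} (hn : ¬ 3 ∣ n) :
    homogeneousSubmodule (Fin 3) ℂ n ⊓ invSub = ⊥ := by
  rw [eq_bot_iff]
  intro p hp
  obtain ⟨h1, h2⟩ := (mem_inf_iff n p).1 hp
  simp only [Submodule.mem_bot]
  apply MvPolynomial.ext; intro m; rw [coeff_zero]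
  by_contra hm
  have ha := h1 m hm
  have hrm : coeff (rot m) p ≠ 0 := by rw [h2]; exact hm
  have hb := h1 (rot m) hrm
  rw [rot0, rot1, rot2] at hb
  omega

def mk3 (d : ℕ) (uv : ℕ × ℕ) : Fin 3 →₀ ℕ :=
  Finsupp.equivFunOnFinite.symm ![d - uv.1 - uv.2, d + 2*uv.1 - uv.2, d - uv.1 + 2*uv.2]

@[simp] lemma mk3_0 (d : ℕ) (uv : ℕ × ℕ) : mk3 d uv 0 = d - uv.1 - uv.2 := rfl
@[simp] lemma mk3_1 (d : ℕ) (uv : ℕ × ℕ) : mk3 d uv 1 = d + 2*uv.1 - uv.2 := rfl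
@[simp] lemma mk3_2 (d : ℕ) (uv : ℕ × ℕ) : mk3 d uv 2 = d - uv.1 + 2*uv.2 := rfl

def Idx (d : ℕ) : Finset (ℕ × ℕ) :=
  (Finset.range (d+1)).biUnion
    (fun s => (Finset.HasAntidiagonal.antidiagonal s).filter (fun uv => 1 ≤ uv.2 ∨ uv = (0,0)))

lemma mem_Idx (d : ℕ) (uv : ℕ × ℕ) :
    uv ∈ Idx d ↔ uv.1 + uv.2 ≤ d ∧ (1 ≤ uv.2 ∨ uv = (0,0)) := by
  simp only [Idx, Finset.mem_biUnion, Finset.mem_range, Finset.mem_filter,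
    Finset.HasAntidiagonal.mem_antidiagonal]
  constructor
  · rintro ⟨s, hs, hsum, hc⟩; exact ⟨by omega, hc⟩
  · rintro ⟨hle, hc⟩; exact ⟨uv.1 + uv.2, by omega, rfl, hc⟩


lemma card_Idx (d : ℕ) : (Idx d).card = 1 + d * (d + 1) / 2 := by
  rw [Idx, Finset.card_biUnion]
  · have hcard : ∀ s ∈ Finset.range (d+1),
        ((Finset.HasAntidiagonal.antidiagonal s).filter (fun uv => 1 ≤ uv.2 ∨ uv = (0,0))).card
        = if s = 0 then 1 else s := by
      intro s _
      split_ifs with hs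
      · subst hs; decide
      · have : (Finset.HasAntidiagonal.antidiagonal s).filter (fun uv => 1 ≤ uv.2 ∨ uv = (0,0))
            = (Finset.HasAntidiagonal.antidiagonal s).erase (s, 0) := by
          ext ⟨u, v⟩
          simp only [Finset.mem_filter, Finset.mem_erase, Finset.HasAntidiagonal.mem_antidiagonal,
            Prod.mk.injEq, ne_eq, not_and]
          constructor
          · rintro ⟨hsum, hc⟩
            refine ⟨fun hu hv => ?_, hsum⟩
            rcases hc with h | h <;> omega
          · rintro ⟨hne, hsum⟩
            refine ⟨hsum, Or.inl ?_⟩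
            by_contra hv
            exact (hne (by omega) (by omega)).elim
        rw [this, Finset.card_erase_of_mem (by simp), Finset.Nat.card_antidiagonal]
        omega
    rw [Finset.sum_congr rfl hcard]
    have : ∀ s ∈ Finset.range (d+1), (if s = 0 then 1 else s) = s + (if s = 0 then 1 else 0) := by
      intro s _; split_ifs with h <;> omega
    rw [Finset.sum_congr rfl this, Finset.sum_add_distrib, Finset.sum_ite_eq' (Finset.range (d+1)),
      Finset.sum_range_id]
    simp only [Finset.mem_range, Nat.lt_add_one_iff, Nat.zero_le, if_true]
    rw [Nat.add_sub_cancel, Nat.mul_comm]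
    omega
  · intro s hs t ht hst
    simp only [Finset.disjoint_left, Finset.mem_filter, Finset.HasAntidiagonal.mem_antidiagonal]
    rintro uv ⟨h1, -⟩ ⟨h2, -⟩
    exact hst (by omega)

def Rm (m : Fin 3 →₀ ℕ) : Prop := (m 0 ≤ m 1 ∧ m 0 < m 2) ∨ (m 0 = m 1 ∧ m 1 = m 2)

def reps (d : ℕ) : Finset (Fin 3 →₀ ℕ) := (Idx d).image (mk3 d)

lemma mem_reps_iff (d : ℕ) (m : Fin 3 →₀ ℕ) :
    m ∈ reps d ↔ m 0 + m 1 + m 2 = 3*d ∧ 3 ∣ (m 1 + 2 * m 2) ∧ Rm m := by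
  simp only [reps, Finset.mem_image]
  constructor
  · rintro ⟨⟨u, v⟩, huv, rfl⟩
    rw [mem_Idx] at huv
    obtain ⟨hle, hc⟩ := huv
    unfold Rm
    simp only [mk3_0, mk3_1, mk3_2]
    refine ⟨by omega, by omega, ?_⟩
    rcases hc with h | h
    · exact Or.inl ⟨by omega, by omega⟩
    · rw [Prod.mk.injEq] at h
      exact Or.inr ⟨by omega, by omega⟩
  · rintro ⟨hsum, hdvd, hR⟩
    unfold Rm at hR
    have h01 : m 0 ≤ m 1 ∧ m 0 ≤ m 2 := by
      rcases hR with ⟨h1, h2⟩ | ⟨h1, h2⟩ <;> omega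
    have hd1 : 3 ∣ (m 1 - m 0) := by omega
    have hd2 : 3 ∣ (m 2 - m 0) := by omega
    obtain ⟨u, hu⟩ := hd1
    obtain ⟨v, hv⟩ := hd2
    refine ⟨(u, v), ?_, ?_⟩
    · rw [mem_Idx]
      constructor
      · omega
      · rcases hR with ⟨h1, h2⟩ | ⟨h1, h2⟩
        · left; omega
        · right; rw [Prod.mk.injEq]; omega
    · have h0 : mk3 d (u,v) 0 = m 0 := by rw [mk3_0]; omega
      have h1 : mk3 d (u,v) 1 = m 1 := by rw [mk3_1]; omega
      have h2 : mk3 d (u,v) 2 = m 2 := by rw [mk3_2]; omega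
      ext i
      fin_cases i
      · exact h0
      · exact h1
      · exact h2

def orb (m : Fin 3 →₀ ℕ) : Finset (Fin 3 →₀ ℕ) := {m, rot m, rot (rot m)}

lemma mem_orb (k m : Fin 3 →₀ ℕ) :
    k ∈ orb m ↔ k = m ∨ k = rot m ∨ k = rot (rot m) := by
  simp [orb]

lemma self_mem_orb (m : Fin 3 →₀ ℕ) : m ∈ orb m := by simp [orb]

lemma rot_mem_orb {k m : Fin 3 →₀ ℕ} (h : k ∈ orb m) : rot k ∈ orb m := by
  rw [mem_orb] at h ⊢
  rcases h with rfl | rfl | rfl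
  · exact Or.inr (Or.inl rfl)
  · exact Or.inr (Or.inr rfl)
  · exact Or.inl (rot_rot_rot m)

lemma mem_orb_symm {k m : Fin 3 →₀ ℕ} (h : k ∈ orb m) : m ∈ orb k := by
  rw [mem_orb] at h
  rcases h with rfl | rfl | rfl
  · exact self_mem_orb _
  · rw [mem_orb]
    exact Or.inr (Or.inr (rot_rot_rot m).symm)
  · rw [mem_orb]
    exact Or.inr (Or.inl (rot_rot_rot m).symm)

lemma mem_orb_trans {a b c : Fin 3 →₀ ℕ} (hab : a ∈ orb b) (hbc : b ∈ orb c) : a ∈ orb c := by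
  rw [mem_orb] at hbc
  rcases hbc with rfl | rfl | rfl
  · exact hab
  · rw [mem_orb] at hab ⊢
    rcases hab with rfl | rfl | rfl
    · exact Or.inr (Or.inl rfl)
    · exact Or.inr (Or.inr rfl)
    · exact Or.inl (rot_rot_rot c)
  · rw [mem_orb] at hab ⊢
    rcases hab with rfl | rfl | rfl
    · exact Or.inr (Or.inr rfl)
    · exact Or.inl (rot_rot_rot c)
    · refine Or.inr (Or.inl ?_)
      conv_lhs => rw [show rot (rot (rot (rot c))) = rot c from congrArg rot (rot_rot_rot c)]

lemma sum_rot (m : Fin 3 →₀ ℕ) : rot m 0 + rot m 1 + rot m 2 = m 0 + m 1 + m 2 := by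
  simp; omega

-- uniqueness of representatives
lemma rep_unique {d : ℕ} {t t' : Fin 3 →₀ ℕ} (ht : t ∈ reps d) (ht' : t' ∈ reps d)
    (h : t' ∈ orb t) : t' = t := by
  obtain ⟨-, -, hR⟩ := (mem_reps_iff d t).1 ht
  obtain ⟨-, -, hR'⟩ := (mem_reps_iff d t').1 ht'
  unfold Rm at hR hR'
  rw [mem_orb] at h
  rcases h with rfl | rfl | rfl
  · rfl
  · simp only [rot0, rot1, rot2] at hR'
    have h0 : t 0 = t 1 ∧ t 1 = t 2 := by omega
    ext i
    fin_cases i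
    · show t 1 = t 0; omega
    · show t 2 = t 1; omega
    · show t 0 = t 2; omega
  · simp only [rot0, rot1, rot2] at hR'
    have h0 : t 0 = t 1 ∧ t 1 = t 2 := by omega
    ext i
    fin_cases i
    · show t 2 = t 0; omega
    · show t 0 = t 1; omega
    · show t 1 = t 2; omega

-- existence of representative in each orbit
lemma exists_rep {d : ℕ} (m : Fin 3 →₀ ℕ) (hsum : m 0 + m 1 + m 2 = 3*d)
    (hdvd : 3 ∣ (m 1 + 2 * m 2)) : ∃ t ∈ reps d, m ∈ orb t := by
  have htri : Rm m ∨ Rm (rot m) ∨ Rm (rot (rot m)) := by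
    unfold Rm
    simp only [rot0, rot1, rot2]
    omega
  rcases htri with h | h | h
  · exact ⟨m, (mem_reps_iff d m).2 ⟨hsum, hdvd, h⟩, self_mem_orb m⟩
  · refine ⟨rot m, (mem_reps_iff d (rot m)).2 ⟨by simp; omega, by simp; omega, h⟩, ?_⟩
    rw [mem_orb]
    exact Or.inr (Or.inr (rot_rot_rot m).symm)
  · refine ⟨rot (rot m), (mem_reps_iff d (rot (rot m))).2 ⟨by simp; omega, by simp; omega, h⟩, ?_⟩
    rw [mem_orb]
    exact Or.inr (Or.inl (rot_rot_rot m).symm)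

def orbSum (m : Fin 3 →₀ ℕ) : MvPolynomial (Fin 3) ℂ := ∑ k ∈ orb m, monomial k 1

lemma coeff_orbSum (m k : Fin 3 →₀ ℕ) :
    coeff k (orbSum m) = if k ∈ orb m then 1 else 0 := by
  rw [orbSum, MvPolynomial.coeff_sum]
  rw [show (∑ b ∈ orb m, coeff k (monomial b 1)) = ∑ b ∈ orb m, if b = k then (1:ℂ) else 0 from
    Finset.sum_congr rfl fun b _ => coeff_monomial k b 1]
  rw [Finset.sum_ite_eq' (orb m) k (fun _ => (1:ℂ))]

lemma orbSum_mem {d : ℕ} {t : Fin 3 →₀ ℕ} (ht : t ∈ reps d) :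
    orbSum t ∈ homogeneousSubmodule (Fin 3) ℂ (3*d) ⊓ invSub := by
  obtain ⟨hsum, hdvd, -⟩ := (mem_reps_iff d t).1 ht
  rw [mem_inf_iff]
  constructor
  · intro m hm
    rw [coeff_orbSum] at hm
    have hmem : m ∈ orb t := by by_contra h; rw [if_neg h] at hm; exact hm rfl
    rw [mem_orb] at hmem
    rcases hmem with rfl | rfl | rfl
    · exact ⟨hsum, hdvd⟩
    · simp only [rot0, rot1, rot2]
      omega
    · simp only [rot0, rot1, rot2]
      omega
  · intro m
    rw [coeff_orbSum, coeff_orbSum]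
    congr 1
    rw [eq_iff_iff]
    constructor
    · intro h
      have := rot_mem_orb (rot_mem_orb h)
      rwa [rot_rot_rot] at this
    · exact rot_mem_orb

lemma coeff_const_on_orb {p : MvPolynomial (Fin 3) ℂ}
    (hp : ∀ m : Fin 3 →₀ ℕ, coeff (rot m) p = coeff m p)
    {k t : Fin 3 →₀ ℕ} (h : k ∈ orb t) : coeff k p = coeff t p := by
  rw [mem_orb] at h
  rcases h with rfl | rfl | rfl
  · rfl
  · exact hp t
  · rw [hp (rot t), hp t]

lemma span_eq (d : ℕ) :
    homogeneousSubmodule (Fin 3) ℂ (3*d) ⊓ invSub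
      = Submodule.span ℂ (Set.range (fun t : ↥(reps d) => orbSum (t : Fin 3 →₀ ℕ))) := by
  apply le_antisymm
  · intro p hp
    obtain ⟨h1, h2⟩ := (mem_inf_iff (3*d) p).1 hp
    have hrepr : p = ∑ t ∈ reps d, coeff t p • orbSum t := by
      apply MvPolynomial.ext
      intro k
      rw [MvPolynomial.coeff_sum]
      rw [show (∑ t ∈ reps d, coeff k (coeff t p • orbSum t))
          = ∑ t ∈ reps d, coeff t p * (if k ∈ orb t then 1 else 0) from
        Finset.sum_congr rfl fun t _ => by rw [coeff_smul, coeff_orbSum, smul_eq_mul]]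
      by_cases hk : coeff k p = 0
      · rw [hk, Finset.sum_eq_zero]
        intro t htmem
        split_ifs with h
        · rw [← coeff_const_on_orb h2 h, hk, zero_mul]
        · rw [mul_zero]
      · obtain ⟨hsum, hdvd⟩ := h1 k hk
        obtain ⟨t0, ht0, hk0⟩ := exists_rep k hsum hdvd
        rw [Finset.sum_eq_single_of_mem t0 ht0]
        · rw [if_pos hk0, mul_one, coeff_const_on_orb h2 hk0]
        · intro t htmem hne
          rw [if_neg, mul_zero]
          intro hkt
          exact hne (rep_unique htmem ht0 (mem_orb_trans (mem_orb_symm hk0) hkt)).symm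
    rw [hrepr]
    apply Submodule.sum_mem
    intro t htmem
    apply Submodule.smul_mem
    exact Submodule.subset_span ⟨⟨t, htmem⟩, rfl⟩
  · rw [Submodule.span_le]
    rintro q ⟨t, rfl⟩
    exact orbSum_mem t.2

lemma orbSum_linearIndependent (d : ℕ) :
    LinearIndependent ℂ (fun t : ↥(reps d) => orbSum (t : Fin 3 →₀ ℕ)) := by
  classical
  let Ψ : MvPolynomial (Fin 3) ℂ →ₗ[ℂ] (↥(reps d) → ℂ) :=
    LinearMap.pi (fun t => MvPolynomial.lcoeff ℂ (t : Fin 3 →₀ ℕ))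
  apply LinearIndependent.of_comp Ψ
  have hcomp : (Ψ ∘ fun t : ↥(reps d) => orbSum (t : Fin 3 →₀ ℕ))
      = fun t => Pi.single t 1 := by
    funext t
    funext t'
    simp only [Function.comp_apply, Ψ, LinearMap.pi_apply, MvPolynomial.lcoeff_apply]
    rw [coeff_orbSum]
    by_cases h : t' = t
    · subst h
      rw [if_pos (self_mem_orb _), Pi.single_eq_same]
    · rw [Pi.single_eq_of_ne h, if_neg]
      intro hmem
      exact h (Subtype.ext (rep_unique t.2 t'.2 hmem))
  rw [hcomp]
  have := (Pi.basisFun ℂ ↥(reps d)).linearIndependent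
  convert this using 1
  funext t
  rw [Pi.basisFun_apply]

lemma card_reps (d : ℕ) : (reps d).card = 1 + d * (d + 1) / 2 := by
  rw [reps, Finset.card_image_of_injOn, card_Idx]
  rintro ⟨u, v⟩ h1 ⟨u', v'⟩ h2 heq
  rw [Finset.mem_coe, mem_Idx] at h1 h2
  have e0 := DFunLike.congr_fun heq (0 : Fin 3)
  have e1 := DFunLike.congr_fun heq (1 : Fin 3)
  have e2 := DFunLike.congr_fun heq (2 : Fin 3)
  simp only [mk3_0, mk3_1, mk3_2] at e0 e1 e2
  rw [Prod.mk.injEq]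
  omega

lemma finrank_inf (d : ℕ) :
    Module.finrank ℂ ↥(homogeneousSubmodule (Fin 3) ℂ (3*d) ⊓ invSub)
      = 1 + d * (d + 1) / 2 := by
  rw [span_eq d, finrank_span_eq_card (orbSum_linearIndependent d), Fintype.card_coe, card_reps]

/-- The space of Γ-invariant homogeneous polynomials of degree n has dimension 0
when 3 ∤ n, and dimension 1 + d(d+1)/2 when n = 3d. -/
theorem dim_invariant_homogeneous (n : ℕ) :
    (¬ (3 ∣ n) →
      Module.finrank ℂ ↥(homogeneousSubmodule (Fin 3) ℂ n ⊓ invSub) = 0) ∧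
    (∀ d : ℕ, n = 3 * d →
      Module.finrank ℂ ↥(homogeneousSubmodule (Fin 3) ℂ n ⊓ invSub) =
        1 + d * (d + 1) / 2) := by
  constructor
  · intro hn
    rw [inf_eq_bot hn]
    exact finrank_bot ℂ _
  · rintro d rfl
    exact finrank_inf d
end
end
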